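/- Let h be a profile of maximal height h_max > H₀ and speed c ≠ 0 (with general parameters E∞, v♯∞, F∞), and assume c·(c·H₀² − v♯∞·s²) > 0 for every s ∈ [H₀, h_max]. Then for every s ∈ [H₀, h_max] one has c² − g·s − (s·(s + 2H₀)/H₀³)·E∞ − (s²·(s + H₀)²/H₀⁵)·(F∞/c) ≥ 0. (This is the necessary positivity condition φ_c ≥ 0 of Proposition 2.) -/

import Mathlib

open Filter

/-- Necessary positivity condition `φ_c ≥ 0` on `[H₀, hmax]` for
the existence of a solitary wave with general parameters `E∞, v♯∞, F∞`. -/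
theorem necessary_positivity_condition
    (g H₀ c vs Einf Finf hmax : ℝ) (hg : 0 < g) (hH : 0 < H₀) (hc : c ≠ 0)
    (hmax_gt : H₀ < hmax)
    (h : ℝ → ℝ) (hC2 : ContDiff ℝ 2 h) (hpos : ∀ x, 0 < h x)
    (hode : ∀ x, (1/3) * c * (c * H₀ ^ 2 - vs * (h x) ^ 2) * deriv (deriv h) x =
      ((h x - H₀) / (2 * h x)) * (2 * c ^ 2 * H₀ - g * h x * (h x + H₀))
        - ((h x) ^ 3 / H₀ ^ 3 - 1) * Einf
        - 2 * (Finf / c) * (((h x) ^ 2 - H₀ ^ 2) * (h x) ^ 3 / H₀ ^ 5)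
        + (c ^ 2 / 3) * H₀ ^ 2 * (deriv h x) ^ 2 / h x)
    (htop : Tendsto h atTop (nhds H₀)) (hbot : Tendsto h atBot (nhds H₀))
    (htop' : Tendsto (deriv h) atTop (nhds 0))
    (hbot' : Tendsto (deriv h) atBot (nhds 0))
    (hle : ∀ x, h x ≤ hmax) (hatt : ∃ x, h x = hmax)
    (hcrit : ∀ s ∈ Set.Icc H₀ hmax, 0 < c * (c * H₀ ^ 2 - vs * s ^ 2)) :
    ∀ s ∈ Set.Icc H₀ hmax,
      0 ≤ c ^ 2 - g * s - (s * (s + 2 * H₀) / H₀ ^ 3) * Einf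
        - (s ^ 2 * (s + H₀) ^ 2 / H₀ ^ 5) * (Finf / c) := by
  set φf : ℝ → ℝ := fun s => c ^ 2 - g * s - (s * (s + 2 * H₀) / H₀ ^ 3) * Einf
        - (s ^ 2 * (s + H₀) ^ 2 / H₀ ^ 5) * (Finf / c) with hφf
  -- continuity of φf
  have hφc : Continuous φf := by
    rw [hφf]
    exact ((continuous_const.sub (continuous_const.mul continuous_id)).sub
      (((continuous_id.mul (continuous_id.add continuous_const)).div_const _).mul continuous_const)).sub
      ((((continuous_pow 2).mul ((continuous_id.add continuous_const).pow 2)).div_const _).mul continuous_const)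
  -- derivative of (y - H₀)^2 * φf y
  have hΨ : ∀ y : ℝ, HasDerivAt (fun y : ℝ => (y - H₀)^2 * φf y)
      (2*(y - H₀) * φf y
       + (y - H₀)^2 * (-g - (2*(y+H₀)/H₀^3)*Einf - ((2*y*(y+H₀)^2 + 2*y^2*(y+H₀))/H₀^5)*(Finf/c))) y := by
    intro y
    simp only [hφf]
    have h1 : HasDerivAt (fun y : ℝ => (y - H₀)^2) (2*(y-H₀)) y := by
      simpa using ((hasDerivAt_id y).sub_const H₀).fun_pow 2
    have h2 : HasDerivAt (fun y : ℝ => c ^ 2 - g * y - (y * (y + 2 * H₀) / H₀ ^ 3) * Einf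
          - (y ^ 2 * (y + H₀) ^ 2 / H₀ ^ 5) * (Finf / c))
        (-g - (2*(y+H₀)/H₀^3)*Einf - ((2*y*(y+H₀)^2 + 2*y^2*(y+H₀))/H₀^5)*(Finf/c)) y := by
      have ha : HasDerivAt (fun y : ℝ => c ^ 2 - g * y) (-g) y := by
        simpa using ((hasDerivAt_id y).const_mul g).const_sub (c^2)
      have hb : HasDerivAt (fun y : ℝ => (y * (y + 2 * H₀) / H₀ ^ 3) * Einf)
          (((1*(y+2*H₀) + y*1) / H₀^3) * Einf) y :=
        (((hasDerivAt_id y).fun_mul ((hasDerivAt_id y).add_const (2*H₀))).div_const (H₀^3)).mul_const Einf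
      have hcc : HasDerivAt (fun y : ℝ => (y ^ 2 * (y + H₀) ^ 2 / H₀ ^ 5) * (Finf / c))
          (((((2:ℕ):ℝ)*y^1*1)*(y+H₀)^2 + y^2*(((2:ℕ):ℝ)*(y+H₀)^1*1)) / H₀^5 * (Finf/c)) y :=
        ((((hasDerivAt_id y).fun_pow 2).fun_mul (((hasDerivAt_id y).add_const H₀).fun_pow 2)).div_const (H₀^5)).mul_const (Finf/c)
      have := (ha.sub hb).sub hcc
      refine this.congr_deriv ?_
      push_cast
      ring
    have := h1.fun_mul h2
    convert this using 1
    try ring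
  -- the conserved quantity
  set W : ℝ → ℝ := fun x => ((1/3) * c * (c * H₀ ^ 2 - vs * (h x) ^ 2) * (deriv h x) ^ 2
      - (h x - H₀) ^ 2 * φf (h x)) / (h x) ^ 2 with hWdef
  have hdh : Differentiable ℝ h := hC2.differentiable (by norm_num)
  have hdh2 : Differentiable ℝ (deriv h) := by
    have h2 : ContDiff ℝ ((1 : WithTop ℕ∞) + 1) h := by norm_num; exact hC2
    exact (contDiff_succ_iff_deriv.mp h2).2.2.differentiable one_ne_zero
  have hW0 : ∀ x, HasDerivAt W 0 x := by
    intro x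
    have hx : HasDerivAt h (deriv h x) x := (hdh x).hasDerivAt
    have hu : HasDerivAt (deriv h) (deriv (deriv h) x) x := (hdh2 x).hasDerivAt
    have ha : HasDerivAt (fun y : ℝ => (1/3) * c * (c * H₀ ^ 2 - vs * y ^ 2))
        ((1/3) * c * -(vs * (((2:ℕ):ℝ) * (h x)^1 * 1))) (h x) :=
      ((((hasDerivAt_id (h x)).fun_pow 2).const_mul vs).const_sub (c*H₀^2)).const_mul ((1/3)*c)
    have hA : HasDerivAt (fun t => (1/3) * c * (c * H₀ ^ 2 - vs * (h t) ^ 2))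
        ((1/3) * c * -(vs * (((2:ℕ):ℝ) * (h x)^1 * 1)) * deriv h x) x := ha.comp x hx
    have hu2 : HasDerivAt (fun t => (deriv h t) ^ 2)
        (((2:ℕ):ℝ) * (deriv h x)^1 * deriv (deriv h) x) x := hu.fun_pow 2
    have hP : HasDerivAt (fun t => (h t - H₀)^2 * φf (h t))
        ((2*(h x - H₀) * φf (h x)
          + (h x - H₀)^2 * (-g - (2*(h x+H₀)/H₀^3)*Einf
            - ((2*(h x)*(h x+H₀)^2 + 2*(h x)^2*(h x+H₀))/H₀^5)*(Finf/c))) * deriv h x) x :=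
      (hΨ (h x)).comp x hx
    have hden : HasDerivAt (fun t => (h t) ^ 2) (((2:ℕ):ℝ) * (h x)^1 * deriv h x) x := hx.fun_pow 2
    have hnum := (hA.fun_mul hu2).fun_sub hP
    have hdiv := hnum.div hden (pow_ne_zero 2 (hpos x).ne')
    rw [hWdef]
    refine hdiv.congr_deriv ?_
    have hodex := hode x
    have hx0 : h x ≠ 0 := (hpos x).ne'
    have hH0 : H₀ ≠ 0 := hH.ne'
    simp only [hφf]
    field_simp at hodex ⊢
    linear_combination (deriv h x) * hodex
  -- W is constant, and tends to 0 at +∞, hence ≡ 0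
  have hconst : ∀ x y, W x = W y :=
    is_const_of_deriv_eq_zero (fun x => (hW0 x).differentiableAt) (fun x => (hW0 x).deriv)
  have tW : Tendsto W atTop (nhds 0) := by
    have t1 : Tendsto (fun x => (1/3) * c * (c * H₀ ^ 2 - vs * (h x) ^ 2) * (deriv h x) ^ 2)
        atTop (nhds ((1/3) * c * (c * H₀ ^ 2 - vs * H₀ ^ 2) * 0 ^ 2)) :=
      ((tendsto_const_nhds.sub ((htop.pow 2).const_mul vs)).const_mul ((1/3)*c)).mul (htop'.pow 2)
    have t2 : Tendsto (fun x => (h x - H₀) ^ 2 * φf (h x)) atTop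
        (nhds ((H₀ - H₀) ^ 2 * φf H₀)) :=
      ((htop.sub_const H₀).pow 2).mul ((hφc.tendsto H₀).comp htop)
    have t3 : Tendsto (fun x => (h x) ^ 2) atTop (nhds (H₀ ^ 2)) := htop.pow 2
    have := (t1.sub t2).div t3 (by positivity)
    rw [hWdef]
    convert this using 2 <;> norm_num
  have hWzero : ∀ x, W x = 0 := by
    intro x
    have hWc : W = fun _ => W x := funext fun y => hconst y x
    rw [hWc] at tW
    exact tendsto_nhds_unique tendsto_const_nhds tW
  have key : ∀ x, (1/3) * c * (c * H₀ ^ 2 - vs * (h x) ^ 2) * (deriv h x) ^ 2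
      = (h x - H₀) ^ 2 * φf (h x) := by
    intro x
    have := hWzero x
    rw [hWdef] at this
    have hx0 : (h x)^2 ≠ 0 := pow_ne_zero 2 (hpos x).ne'
    rw [div_eq_zero_iff] at this
    rcases this with h1 | h1
    · exact sub_eq_zero.mp h1
    · exact absurd h1 hx0
  -- positivity on (H₀, hmax]
  have main : ∀ s, H₀ < s → s ≤ hmax → 0 ≤ φf s := by
    intro s hs1 hs2
    obtain ⟨x₀, hx₀⟩ := hatt
    have hev : ∀ᶠ x in atTop, h x < s := htop.eventually_lt_const hs1
    obtain ⟨x₁, hx₁⟩ := hev.exists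
    have hcont : ContinuousOn h (Set.uIcc x₀ x₁) := hdh.continuous.continuousOn
    have hmem : s ∈ Set.uIcc (h x₀) (h x₁) := by
      rw [Set.mem_uIcc]
      right
      exact ⟨le_of_lt hx₁, hx₀ ▸ hs2⟩
    obtain ⟨x, _, hxs⟩ := intermediate_value_uIcc hcont hmem
    have hk := key x
    rw [hxs] at hk
    have hpos2 : 0 < c * (c * H₀ ^ 2 - vs * s ^ 2) := hcrit s ⟨le_of_lt hs1, hs2⟩
    have hlhs : 0 ≤ (1/3) * c * (c * H₀ ^ 2 - vs * s ^ 2) * (deriv h x) ^ 2 := by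
      have h13 : (0:ℝ) ≤ (1/3) * (c * (c * H₀ ^ 2 - vs * s ^ 2)) := by linarith
      calc (0:ℝ) ≤ (1/3) * (c * (c * H₀ ^ 2 - vs * s ^ 2)) * (deriv h x)^2 :=
            mul_nonneg h13 (sq_nonneg _)
        _ = (1/3) * c * (c * H₀ ^ 2 - vs * s ^ 2) * (deriv h x) ^ 2 := by ring
    rw [hk] at hlhs
    have hsq : 0 < (s - H₀)^2 := pow_pos (sub_pos.mpr hs1) 2
    nlinarith [hlhs, hsq]
  intro s hs
  rcases eq_or_lt_of_le hs.1 with heq | hlt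
  · -- s = H₀ : by continuity from the right
    have hne : (nhdsWithin H₀ (Set.Ioi H₀)).NeBot := nhdsGT_neBot H₀
    have htend : Tendsto φf (nhdsWithin H₀ (Set.Ioi H₀)) (nhds (φf H₀)) :=
      (hφc.tendsto H₀).mono_left nhdsWithin_le_nhds
    have hevp : ∀ᶠ t in nhdsWithin H₀ (Set.Ioi H₀), 0 ≤ φf t := by
      filter_upwards [Ioo_mem_nhdsGT_of_mem (Set.mem_Ico.mpr ⟨le_refl H₀, hmax_gt⟩)] with t ht
      exact main t ht.1 (le_of_lt ht.2)
    have := ge_of_tendsto htend hevp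
    exact heq ▸ this
  · exact main s hlt hs.2
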